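/- The function f : ℕ → ℕ defined by f(0) = f(1) = 0 and f(k) = 2(k−1) + 2·∑_{i=0}^{k−2} f(i) for k ≥ 2 satisfies the closed form: f(k) = (2/3)(2^k − 1) if k is even and positive, and f(k) = (2/3)(2^k − 2) if k is odd. -/

import Mathlib

def addedEdges : ℕ → ℕ
  | 0 => 0
  | 1 => 0
  | k + 2 => 2 * (k + 1) + 2 * ∑ i ∈ (Finset.range (k + 1)).attach,
      addedEdges i.1
  decreasing_by
    have h := Finset.mem_range.mp i.2
    omega

lemma addedEdges_eq (k : ℕ) :
    addedEdges (k + 2) = 2 * (k + 1) + 2 * ∑ i ∈ Finset.range (k + 1), addedEdges i := by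
  rw [addedEdges]
  congr 1
  rw [← Finset.sum_attach (Finset.range (k + 1)) (fun i => addedEdges i)]

lemma addedEdges_rec (k : ℕ) :
    addedEdges (k + 3) = addedEdges (k + 2) + 2 * addedEdges (k + 1) + 2 := by
  rw [show k + 3 = (k + 1) + 2 from rfl, addedEdges_eq, addedEdges_eq,
    Finset.sum_range_succ]
  ring

lemma addedEdges_key (k : ℕ) :
    3 * addedEdges k + (if Even k then 2 else 4) = 2 * 2 ^ k := by
  induction k using Nat.twoStepInduction with
  | zero => simp [addedEdges]
  | one => simp [addedEdges, Nat.even_iff]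
  | more n ih1 ih2 =>
    match n with
    | 0 =>
      rw [show addedEdges 2 = 2 by rw [addedEdges_eq]; simp [addedEdges]]
      simp [Nat.even_iff]
    | m + 1 =>
      rw [addedEdges_rec]
      have he : Even (m + 1 + 2) ↔ Even (m + 1) := by simp [Nat.even_add_one]
      have hne : Even (m + 1 + 1) ↔ ¬ Even (m + 1) := by simp [Nat.even_add_one]
      have h4 : (2:ℕ) * 2 ^ (m + 1 + 2) = 4 * (2 * 2 ^ (m + 1)) := by ring
      have h5 : (2:ℕ) * 2 ^ (m + 1 + 1) = 2 * (2 * 2 ^ (m + 1)) := by ring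
      rw [show m+1+1 = m+2 from rfl] at ih2 hne h5
      rw [show m+1+2 = m+3 from rfl] at he h4 ⊢
      by_cases h : Even (m + 1)
      · rw [if_pos h] at ih1
        rw [if_neg (fun hh => (hne.mp hh) h)] at ih2
        rw [if_pos (he.mpr h)]
        omega
      · rw [if_neg h] at ih1
        rw [if_pos (hne.mpr h)] at ih2
        rw [if_neg (fun hh => h (he.mp hh))]
        omega

theorem addedEdges_closed_form (k : ℕ) :
    (Even k ∧ 0 < k → 3 * addedEdges k = 2 * (2 ^ k - 1)) ∧
    (Odd k → 3 * addedEdges k = 2 * (2 ^ k - 2)) := by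
  have h := addedEdges_key k
  have hp : 2 ≤ 2 ^ k ∨ k = 0 := by
    rcases k with _ | m
    · right; rfl
    · left; exact Nat.one_lt_two_pow (by omega)
  constructor
  · rintro ⟨hev, hk⟩
    rw [if_pos hev] at h
    have : 2 ≤ 2 ^ k := by rcases hp with h' | h' <;> omega
    omega
  · intro hodd
    rw [if_neg (Nat.not_even_iff_odd.mpr hodd)] at h
    have : 2 ≤ 2 ^ k := by
      rcases hp with h' | h'
      · omega
      · subst h'; exact absurd hodd (by simp)
    omega
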